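/- Let B = (b_{ij}) be an N × N matrix over a field with rank(B) = D', and let k be a positive integer. Define A = (a_{ij}) by a_{ij} = b_{ij}^k. Then rank(A) ≤ C(D'+k−1, k), the binomial coefficient. -/

import Mathlib

open Finset in
/-- If `B` factors as `C0 * R0` through `Fin D`, then the entrywise `k`-th power of `B`
has rank at most `(D + k - 1).choose k`. -/
theorem rank_entrywise_pow_le_aux {F : Type*} [Field F] (N k D : ℕ)
    (B : Matrix (Fin N) (Fin N) F) (C0 : Matrix (Fin N) (Fin D) F)
    (R0 : Matrix (Fin D) (Fin N) F) (hB : ∀ i j, B i j = ∑ d, C0 i d * R0 d j) :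
    (Matrix.of fun i j => (B i j) ^ k).rank ≤ (D + k - 1).choose k := by
  classical
  -- the class of a function `p : Fin k → Fin D` as an element of `Sym (Fin D) k`
  let φ : (Fin k → Fin D) → Sym (Fin D) k :=
    fun p => ⟨Multiset.map p Finset.univ.val, by simp⟩
  let C1 : Matrix (Fin N) (Sym (Fin D) k) F :=
    Matrix.of fun i m => ∑ p ∈ Finset.univ.filter (fun p => φ p = m), ∏ t, C0 i (p t)
  let R1 : Matrix (Sym (Fin D) k) (Fin N) F :=
    Matrix.of fun m j => ((m : Multiset (Fin D)).map (fun d => R0 d j)).prod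
  have key : (Matrix.of fun i j => (B i j) ^ k) = C1 * R1 := by
    ext i j
    simp only [Matrix.of_apply, Matrix.mul_apply, hB]
    rw [Fintype.sum_pow]
    rw [← Finset.sum_fiberwise Finset.univ φ
      (fun p => ∏ t, (C0 i (p t) * R0 (p t) j))]
    refine Finset.sum_congr rfl fun m _ => ?_
    have : ∀ p ∈ Finset.univ.filter (fun p => φ p = m),
        (∏ t, (C0 i (p t) * R0 (p t) j))
          = (∏ t, C0 i (p t)) * ((m : Multiset (Fin D)).map (fun d => R0 d j)).prod := by
      intro p hp
      have hpm : φ p = m := (Finset.mem_filter.mp hp).2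
      have hmm : (m : Multiset (Fin D)) = Multiset.map p Finset.univ.val := by
        rw [← hpm]; rfl
      rw [Finset.prod_mul_distrib, hmm, Multiset.map_map]
      congr 1
    rw [Finset.sum_congr rfl this, ← Finset.sum_mul]
    rfl
  rw [key]
  calc (C1 * R1).rank ≤ C1.rank := Matrix.rank_mul_le_left C1 R1
    _ ≤ Fintype.card (Sym (Fin D) k) := Matrix.rank_le_card_width C1
    _ = (D + k - 1).choose k := by
        rw [Sym.card_sym_eq_choose, Fintype.card_fin]

/-- Entrywise `k`-th power increases rank at most to `C(D'+k−1, k)` where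
`D'` is the rank of the original matrix. -/
theorem rank_entrywise_pow_le {F : Type*} [Field F] (N k : ℕ) (hk : 0 < k)
    (B : Matrix (Fin N) (Fin N) F) :
    (Matrix.of fun i j => (B i j) ^ k).rank ≤ (B.rank + k - 1).choose k := by
  classical
  set V : Submodule F (Fin N → F) := Submodule.span F (Set.range B) with hV
  have hrank : B.rank = Module.finrank F V := Matrix.rank_eq_finrank_span_row B
  have hmem : ∀ i, B i ∈ V := fun i => Submodule.subset_span (Set.mem_range_self i)
  let b : Module.Basis (Fin (Module.finrank F V)) F V := Module.finBasis F V
  let C0 : Matrix (Fin N) (Fin (Module.finrank F V)) F :=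
    Matrix.of fun i d => b.repr ⟨B i, hmem i⟩ d
  let R0 : Matrix (Fin (Module.finrank F V)) (Fin N) F :=
    Matrix.of fun d j => (b d : Fin N → F) j
  have hB : ∀ i j, B i j = ∑ d, C0 i d * R0 d j := by
    intro i j
    have h1 : (⟨B i, hmem i⟩ : V) = ∑ d, b.repr ⟨B i, hmem i⟩ d • b d :=
      (b.sum_repr ⟨B i, hmem i⟩).symm
    have h2 : (B i : Fin N → F) = ∑ d, b.repr ⟨B i, hmem i⟩ d • (b d : Fin N → F) := by
      have := congrArg (Subtype.val : V → (Fin N → F)) h1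
      simpa only [Submodule.coe_sum, Submodule.coe_smul] using this
    calc B i j = (B i : Fin N → F) j := rfl
      _ = (∑ d, b.repr ⟨B i, hmem i⟩ d • (b d : Fin N → F)) j := congrFun h2 j
      _ = ∑ d, C0 i d * R0 d j := by
          simp [Finset.sum_apply, C0, R0, smul_eq_mul]
  rw [hrank]
  exact rank_entrywise_pow_le_aux N k (Module.finrank F V) B C0 R0 hB
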